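/- Let g ≥ 3 and let H = (h_{i,j}) be a generalized Hadamard matrix GH(g,λ) over ℤ_g, and let ζ be a primitive g-th root of unity in ℂ. Then the matrix S = (ζ^{h_{i,j}}) satisfies S S* = gλ·I, all entries of S have modulus 1, and for all distinct rows k, ℓ, the vectors of entrywise squares (ζ^{2h_{k,j}})_j and (ζ^{2h_{ℓ,j}})_j are orthogonal; i.e., S is an S-Hadamard matrix. -/

import Mathlib

open scoped BigOperators

lemma aux_pow_val_add {g : ℕ} [NeZero g] {x : ℂ} (hx : x ^ g = 1)
    (a b : ZMod g) : x ^ (a + b).val = x ^ a.val * x ^ b.val := by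
  rw [ZMod.val_add, ← pow_add]
  conv_rhs => rw [← Nat.mod_add_div (a.val + b.val) g]
  rw [pow_add, pow_mul, hx, one_pow, mul_one]

lemma aux_sum_zmod {g : ℕ} [NeZero g] (x : ℂ) (hx : x ^ g = 1) (hx1 : x ≠ 1) :
    ∑ a : ZMod g, x ^ a.val = 0 := by
  have h : ∑ a : ZMod g, x ^ a.val = ∑ i ∈ Finset.range g, x ^ i := by
    refine Finset.sum_nbij' (fun a => a.val) (fun i => ((i : ℕ) : ZMod g))
      ?_ ?_ ?_ ?_ ?_
    · intro a _; exact Finset.mem_range.mpr (ZMod.val_lt a)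
    · intros; exact Finset.mem_univ _
    · intro a _; exact ZMod.natCast_rightInverse a
    · intro i hi; exact ZMod.val_natCast_of_lt (Finset.mem_range.mp hi)
    · intros; rfl
  rw [h, geom_sum_eq hx1, hx, sub_self, zero_div]

lemma aux_entry {g : ℕ} [NeZero g] {x : ℂ} (hx : x ^ g = 1) (hx0 : x ≠ 0)
    (hconj : (starRingEnd ℂ) x = x⁻¹) (a b : ZMod g) :
    x ^ a.val * (starRingEnd ℂ) (x ^ b.val) = x ^ (a - b).val := by
  rw [map_pow, hconj, inv_pow]
  have h := aux_pow_val_add hx (a - b) b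
  rw [sub_add_cancel] at h
  field_simp [h]
  rw [h]; ring

theorem sHadamard_of_genHadamard (g lam : ℕ) (hg : 3 ≤ g)
    (H : Fin (g * lam) → Fin (g * lam) → ZMod g)
    (hGH : ∀ i j : Fin (g * lam), i ≠ j → ∀ a : ZMod g,
      (Finset.univ.filter (fun c => H i c - H j c = a)).card = lam)
    (ζ : ℂ) (hζ : IsPrimitiveRoot ζ g)
    (S : Fin (g * lam) → Fin (g * lam) → ℂ)
    (hS : ∀ i j, S i j = ζ ^ (H i j).val) :
    (∀ i j : Fin (g * lam),
        ∑ c, S i c * (starRingEnd ℂ) (S j c) =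
          if i = j then ((g * lam : ℕ) : ℂ) else 0) ∧
    (∀ i j, ‖S i j‖ = 1) ∧
    (∀ k l : Fin (g * lam), k ≠ l →
        ∑ c, (S k c) ^ 2 * (starRingEnd ℂ) ((S l c) ^ 2) = 0) := by
  haveI : NeZero g := ⟨by omega⟩
  have hζg : ζ ^ g = 1 := hζ.pow_eq_one
  have habs : ‖ζ‖ = 1 :=
    Complex.norm_eq_one_of_pow_eq_one hζg (by omega)
  have hζ0 : ζ ≠ 0 := by
    intro h; rw [h] at habs; simp at habs
  have hconj : (starRingEnd ℂ) ζ = ζ⁻¹ := (Complex.inv_eq_conj habs).symm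
  -- the general off-diagonal computation
  have key : ∀ (x : ℂ), x ^ g = 1 → x ≠ 1 → x ≠ 0 → (starRingEnd ℂ) x = x⁻¹ →
      ∀ i j : Fin (g * lam), i ≠ j →
      ∑ c, x ^ (H i c).val * (starRingEnd ℂ) (x ^ (H j c).val) = 0 := by
    intro x hx hx1 hx0 hxc i j hij
    have h1 : ∀ c, x ^ (H i c).val * (starRingEnd ℂ) (x ^ (H j c).val)
        = x ^ (H i c - H j c).val := fun c => aux_entry hx hx0 hxc _ _
    simp only [h1]
    rw [← Finset.sum_fiberwise Finset.univ (fun c => H i c - H j c)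
      (fun c => x ^ (H i c - H j c).val)]
    have h2 : ∀ a : ZMod g,
        ∑ c ∈ Finset.univ.filter (fun c => H i c - H j c = a),
          x ^ (H i c - H j c).val = (lam : ℂ) * x ^ a.val := by
      intro a
      rw [Finset.sum_congr rfl (fun c hc => by
        rw [(Finset.mem_filter.mp hc).2]), Finset.sum_const, hGH i j hij a,
        nsmul_eq_mul]
    simp only [h2]
    rw [← Finset.mul_sum, aux_sum_zmod x hx hx1, mul_zero]
  refine ⟨?_, ?_, ?_⟩
  · intro i j
    by_cases hij : i = j
    · subst hij
      simp only [if_pos rfl]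
      have : ∀ c, S i c * (starRingEnd ℂ) (S i c) = 1 := by
        intro c
        rw [Complex.mul_conj]
        have : ‖S i c‖ = 1 := by
          rw [hS]; simp [map_pow, habs]
        rw [Complex.normSq_eq_norm_sq, this]; norm_num
      simp [this, Finset.card_univ]
    · rw [if_neg hij]
      have := key ζ hζg (hζ.ne_one (by omega)) hζ0 hconj i j hij
      simpa only [hS] using this
  · intro i j
    rw [hS]
    simp [map_pow, habs]
  · intro k l hkl
    have h2g : ζ ^ 2 ≠ 1 := hζ.pow_ne_one_of_pos_of_lt (by norm_num) (by omega)
    have h2pow : (ζ ^ 2) ^ g = 1 := by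
      rw [← pow_mul, mul_comm, pow_mul, hζg, one_pow]
    have h2conj : (starRingEnd ℂ) (ζ ^ 2) = (ζ ^ 2)⁻¹ := by
      rw [map_pow, hconj, inv_pow]
    have := key (ζ ^ 2) h2pow h2g (pow_ne_zero 2 hζ0) h2conj k l hkl
    have hsw : ∀ v : ℕ, (ζ ^ v) ^ 2 = (ζ ^ 2) ^ v := fun v => by
      rw [← pow_mul, ← pow_mul, mul_comm]
    simp only [hS, hsw]
    exact this
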